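/- Let f(x) be a polynomial of degree n ≥ 2 over 𝔽_2 with nonzero constant term. If f is k-regular over 𝔽_2 for every k with 1 ≤ k ≤ ⌊n/2⌋, then f is irreducible over 𝔽_2. -/

import Mathlib

open Polynomial

/-- `f` is `k`-regular over `K`: no product of `k` roots of `f` (with distinct
indices, counting multiplicity) in an algebraic closure of `K` equals `1`. -/
def kRegular (K : Type*) [Field K] (f : Polynomial K) (k : ℕ) : Prop :=
  ∀ s : Multiset (AlgebraicClosure K),
    s ≤ (f.map (algebraMap K (AlgebraicClosure K))).roots →
    Multiset.card s = k → s.prod ≠ 1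

theorem irreducible_of_regular_F2 (f : Polynomial (ZMod 2)) (n : ℕ)
    (hn : f.natDegree = n) (h2 : 2 ≤ n) (hc : f.coeff 0 ≠ 0)
    (hreg : ∀ k, 1 ≤ k → k ≤ n / 2 → kRegular (ZMod 2) f k) :
    Irreducible f := by
  have one01 : ∀ x : ZMod 2, x ≠ 0 → x = 1 := by decide
  have hf0 : f ≠ 0 := fun h => hc (by simp [h])
  have hfu : ¬ IsUnit f := by
    intro h
    have := natDegree_eq_zero_of_isUnit h
    omega
  -- key: no divisor of f has degree in [1, n/2]
  have key : ∀ g : Polynomial (ZMod 2), g ∣ f → 1 ≤ g.natDegree →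
      g.natDegree ≤ n / 2 → False := by
    intro g hdvd hd1 hd2
    have hg0 : g ≠ 0 := fun h => hf0 (zero_dvd_iff.mp (h ▸ hdvd))
    have hgc : g.coeff 0 ≠ 0 := by
      obtain ⟨c, hcfac⟩ := hdvd
      intro h
      apply hc
      rw [hcfac, mul_coeff_zero, h, zero_mul]
    have hgmon : g.Monic := one01 _ (leadingCoeff_ne_zero.mpr hg0)
    set φ := algebraMap (ZMod 2) (AlgebraicClosure (ZMod 2))
    set G := g.map φ with hG
    have hGmon : G.Monic := hgmon.map φ
    have hGsplits : G.Splits :=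
      IsAlgClosed.splits G
    have hcard : Multiset.card G.roots = g.natDegree := by
      rw [splits_iff_card_roots.mp hGsplits, natDegree_map]
    have hprod : G.roots.prod = 1 := by
      have h0 := hGsplits.coeff_zero_eq_prod_roots_of_monic hGmon
      have hc0 : G.coeff 0 = 1 := by
        rw [hG, coeff_map, one01 _ hgc, map_one]
      rw [hc0, natDegree_map] at h0
      have hneg : (-1 : AlgebraicClosure (ZMod 2)) = 1 := CharTwo.neg_eq 1
      rw [hneg, one_pow, one_mul] at h0
      exact h0.symm
    have hle : G.roots ≤ (f.map φ).roots :=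
      roots.le_of_dvd (map_ne_zero hf0) (Polynomial.map_dvd φ hdvd)
    exact hreg g.natDegree hd1 hd2 G.roots hle hcard hprod
  rw [irreducible_iff]
  refine ⟨hfu, fun a b hab => ?_⟩
  by_contra hcon
  push_neg at hcon
  obtain ⟨hua, hub⟩ := hcon
  have ha0 : a ≠ 0 := fun h => hf0 (by simp [hab, h])
  have hb0 : b ≠ 0 := fun h => hf0 (by simp [hab, h])
  have degpos : ∀ p : Polynomial (ZMod 2), p ≠ 0 → ¬ IsUnit p → 1 ≤ p.natDegree := by
    intro p hp hup
    rcases Nat.eq_zero_or_pos p.natDegree with h | h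
    · exfalso
      apply hup
      rw [eq_C_of_natDegree_eq_zero h]
      refine isUnit_C.mpr (isUnit_iff_ne_zero.mpr (fun hz => hp ?_))
      rw [eq_C_of_natDegree_eq_zero h, hz, map_zero]
    · exact h
  have hda := degpos a ha0 hua
  have hdb := degpos b hb0 hub
  have hsum : a.natDegree + b.natDegree = n := by
    rw [← hn, hab, natDegree_mul ha0 hb0]
  rcases le_or_gt a.natDegree (n / 2) with h | h
  · exact key a ⟨b, hab⟩ hda h
  · exact key b ⟨a, by rw [hab, mul_comm]⟩ hdb (by omega)
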